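/- Let G = (V,E;w) be a finite simple undirected graph with positive vertex weights and no isolated vertices, and suppose its minimal α-ratio equals 1, i.e. w(Γ(S)) ≥ w(S) for every nonempty S ⊆ V. Then there exists f : V × V → ℝ with f(u,v) ≥ 0 for all u,v and f(u,v) = 0 unless (u,v) ∈ E, such that Σ_{v∈Γ(u)} f(u,v) = w(u) and Σ_{v∈Γ(u)} f(v,u) = w(u) for every u ∈ V. -/

import Mathlib

open Finset

/-- The total weight of a finite set of vertices. -/
def wsum {V : Type*} (w : V → ℝ) (S : Finset V) : ℝ := ∑ v ∈ S, w v

/-- The neighborhood `Γ(S)` of a set `S` of vertices: all vertices adjacent to at least one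
vertex of `S`. -/
def nbhd {V : Type*} [Fintype V] [DecidableEq V] (G : SimpleGraph V) [DecidableRel G.Adj]
    (S : Finset V) : Finset V :=
  univ.filter fun v => ∃ u ∈ S, G.Adj u v

/-- The α-ratio `α(S) = w(Γ(S)) / w(S)` of a set `S`. -/
noncomputable def alphaR {V : Type*} [Fintype V] [DecidableEq V] (G : SimpleGraph V)
    [DecidableRel G.Adj] (w : V → ℝ) (S : Finset V) : ℝ :=
  wsum w (nbhd G S) / wsum w S


section Aux
open MeasureTheory Set

lemma intble_ind (c a b : ℝ) :
    IntervalIntegrable (Set.indicator (Set.Iio c) fun _ => (1:ℝ)) volume a b := by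
  rw [intervalIntegrable_iff]
  refine (MeasureTheory.integrable_indicator_iff measurableSet_Iio).2 ?_
  refine MeasureTheory.integrableOn_const (ne_of_lt ?_)
  calc (volume.restrict (Set.uIoc a b)) (Set.Iio c) ≤ volume (Set.uIoc a b) := by
        rw [Measure.restrict_apply measurableSet_Iio]
        exact measure_mono Set.inter_subset_right
    _ < ⊤ := by rw [Set.uIoc]; exact measure_Ioc_lt_top

lemma integ_ind {c M : ℝ} (hc : c ≤ M) (hM : 0 ≤ M) :
    ∫ t in (0:ℝ)..M, Set.indicator (Set.Iio c) (fun _ => (1:ℝ)) t = max c 0 := by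
  rw [intervalIntegral.integral_of_le hM, MeasureTheory.setIntegral_indicator measurableSet_Iio]
  have hset : Set.Ioc 0 M ∩ Set.Iio c = Set.Ioo 0 c := by
    ext t
    simp only [Set.mem_inter_iff, Set.mem_Ioc, Set.mem_Iio, Set.mem_Ioo]
    constructor
    · rintro ⟨⟨h1, h2⟩, h3⟩; exact ⟨h1, h3⟩
    · rintro ⟨h1, h2⟩; exact ⟨⟨h1, (h2.le.trans hc)⟩, h2⟩
  rw [hset]
  simp [Real.volume_Ioo, ENNReal.toReal_ofReal']

lemma integ_ind_sub {c M : ℝ} (hc : |c| ≤ M) (hM : 0 ≤ M) :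
    ∫ t in (0:ℝ)..M, (Set.indicator (Set.Iio c) (fun _ => (1:ℝ)) t
      - Set.indicator (Set.Iio (-c)) (fun _ => (1:ℝ)) t) = c := by
  have h1 : c ≤ M := le_trans (le_abs_self c) hc
  have h2 : -c ≤ M := le_trans (neg_le_abs c) hc
  rw [intervalIntegral.integral_sub (intble_ind _ _ _) (intble_ind _ _ _),
    integ_ind h1 hM, integ_ind h2 hM]
  rcases le_total 0 c with h | h
  · rw [max_eq_left h, max_eq_right (neg_nonpos.2 h), sub_zero]
  · rw [max_eq_right h, max_eq_left (neg_nonneg.2 h), zero_sub, neg_neg]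

end Aux

section Core
open MeasureTheory Set
variable {V : Type*} [Fintype V] [DecidableEq V]
    (G : SimpleGraph V) [DecidableRel G.Adj] (w : V → ℝ)

/-- Hall-type step: weight of `{u : t < -(g u)}` is at most weight of `{v : t < h v}`. -/
lemma hall_step (hw : ∀ v, 0 < w v)
    (hα : ∀ S : Finset V, S.Nonempty → wsum w S ≤ wsum w (nbhd G S))
    (g h : V → ℝ) (hedge : ∀ u v, G.Adj u v → 0 ≤ g u + h v) (t : ℝ) :
    ∑ u ∈ univ.filter (fun u => t < -(g u)), w u ≤ ∑ v ∈ univ.filter (fun v => t < h v), w v := by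
  classical
  set S : Finset V := univ.filter (fun u => t < -(g u)) with hS
  rcases S.eq_empty_or_nonempty with he | hne
  · rw [he]
    simp only [Finset.sum_empty]
    exact Finset.sum_nonneg fun v _ => (hw v).le
  · refine le_trans (hα S hne) ?_
    refine Finset.sum_le_sum_of_subset_of_nonneg ?_ (fun v _ _ => (hw v).le)
    intro v hv
    rw [nbhd, Finset.mem_filter] at hv
    obtain ⟨-, u, huS, hadj⟩ := hv
    rw [hS, Finset.mem_filter] at huS
    have := hedge u v hadj
    rw [Finset.mem_filter]
    exact ⟨Finset.mem_univ _, by linarith [huS.2]⟩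

lemma core_dual (hw : ∀ v, 0 < w v)
    (hα : ∀ S : Finset V, S.Nonempty → wsum w S ≤ wsum w (nbhd G S))
    (p q : V → ℝ) (hpq : ∀ u v, G.Adj u v → 0 ≤ p u + q v) :
    0 ≤ ∑ u, w u * p u + ∑ v, w v * q v := by
  classical
  set M : ℝ := (∑ u, (|p u| + |q u|)) + 1 with hMdef
  have hsum_nonneg : 0 ≤ ∑ u, (|p u| + |q u|) :=
    Finset.sum_nonneg fun u _ => add_nonneg (abs_nonneg _) (abs_nonneg _)
  have hM0 : (0:ℝ) ≤ M := by rw [hMdef]; linarith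
  have habs : ∀ u, |p u| ≤ M ∧ |q u| ≤ M := by
    intro u
    have h1 : |p u| + |q u| ≤ ∑ x, (|p x| + |q x|) :=
      Finset.single_le_sum (f := fun x => |p x| + |q x|)
      (fun i _ => add_nonneg (abs_nonneg _) (abs_nonneg _)) (Finset.mem_univ u)
    constructor <;> [skip; skip] <;>
      · rw [hMdef]; have := abs_nonneg (p u); have := abs_nonneg (q u); linarith
  set ind : ℝ → ℝ → ℝ := fun c t => Set.indicator (Set.Iio c) (fun _ => (1:ℝ)) t with hind
  have hterm_int : ∀ (g : V → ℝ) (u : V),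
      IntervalIntegrable (fun t => w u * (ind (g u) t - ind (-(g u)) t)) volume 0 M :=
    fun g u => (((intble_ind (g u) 0 M).sub (intble_ind (-(g u)) 0 M)).const_mul (w u))
  have hsum_int : ∀ g : V → ℝ,
      IntervalIntegrable (fun t => ∑ u, w u * (ind (g u) t - ind (-(g u)) t)) volume 0 M := by
    intro g
    have := IntervalIntegrable.sum (μ := volume) (a := (0:ℝ)) (b := M) Finset.univ
      (f := fun u t => w u * (ind (g u) t - ind (-(g u)) t)) (fun u _ => hterm_int g u)
    simpa [Finset.sum_fn] using this
  have hval : ∀ g : V → ℝ, (∀ u, |g u| ≤ M) →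
      ∫ t in (0:ℝ)..M, (∑ u, w u * (ind (g u) t - ind (-(g u)) t)) = ∑ u, w u * g u := by
    intro g hg
    rw [intervalIntegral.integral_finset_sum (fun u _ => hterm_int g u)]
    refine Finset.sum_congr rfl fun u _ => ?_
    rw [intervalIntegral.integral_const_mul, integ_ind_sub (hg u) hM0]
  have hptwise : ∀ t ∈ Set.Icc (0:ℝ) M,
      0 ≤ (∑ u, w u * (ind (p u) t - ind (-(p u)) t))
        + ∑ v, w v * (ind (q v) t - ind (-(q v)) t) := by
    intro t _
    have hsplit : ∀ g : V → ℝ, ∑ u, w u * (ind (g u) t - ind (-(g u)) t)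
        = (∑ u ∈ univ.filter (fun u => t < g u), w u)
          - ∑ u ∈ univ.filter (fun u => t < -(g u)), w u := by
      intro g
      simp only [hind, Set.indicator_apply, Set.mem_Iio, mul_sub, Finset.sum_sub_distrib,
        mul_ite, mul_one, mul_zero, Finset.sum_filter]
    rw [hsplit, hsplit]
    have h1 := hall_step G w hw hα p q hpq t
    have h2 := hall_step G w hw hα q p
      (fun u v hadj => by have := hpq v u (G.adj_symm hadj); linarith) t
    linarith
  have hnn := intervalIntegral.integral_nonneg (f := fun t =>
      (∑ u, w u * (ind (p u) t - ind (-(p u)) t)) + ∑ v, w v * (ind (q v) t - ind (-(q v)) t))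
    (μ := volume) hM0 hptwise
  rw [intervalIntegral.integral_add (hsum_int p) (hsum_int q),
    hval p (fun u => (habs u).1), hval q (fun u => (habs u).2)] at hnn
  exact hnn

end Core

section Geom
variable {V : Type*} [Fintype V] [DecidableEq V]
    (G : SimpleGraph V) [DecidableRel G.Adj] (w : V → ℝ)

local notation "EE" => EuclideanSpace ℝ (V × V)
local notation "FF" => EuclideanSpace ℝ (V ⊕ V)

/-- The cone of nonnegative functions supported on edges. -/
noncomputable def coneK : ProperCone ℝ (EuclideanSpace ℝ (V × V)) where
  toSubmodule :=
  { carrier := {x : EE | ∀ p : V × V, 0 ≤ x p ∧ (¬ G.Adj p.1 p.2 → x p = 0)}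
    add_mem' := by
      intro x y hx hy p
      refine ⟨add_nonneg (hx p).1 (hy p).1, fun h => ?_⟩
      show x p + y p = 0
      rw [(hx p).2 h, (hy p).2 h, add_zero]
    zero_mem' := fun p => ⟨le_refl _, fun _ => rfl⟩
    smul_mem' := by
      intro c x hx p
      refine ⟨?_, fun h => ?_⟩
      · show 0 ≤ (c : ℝ) * x p
        exact mul_nonneg c.2 (hx p).1
      · show (c : ℝ) * x p = 0
        rw [(hx p).2 h, mul_zero] }
  isClosed' := by
    have : {x : EE | ∀ p : V × V, 0 ≤ x p ∧ (¬ G.Adj p.1 p.2 → x p = 0)}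
        = ⋂ p : V × V, ({x : EE | 0 ≤ x p} ∩ {x : EE | ¬ G.Adj p.1 p.2 → x p = 0}) := by
      ext x
      simp only [Set.mem_iInter, Set.mem_inter_iff, Set.mem_setOf_eq]
    show IsClosed {x : EE | ∀ p : V × V, 0 ≤ x p ∧ (¬ G.Adj p.1 p.2 → x p = 0)}
    rw [this]
    refine isClosed_iInter fun p => IsClosed.inter ?_ ?_
    · exact isClosed_le continuous_const (EuclideanSpace.proj p).continuous
    · by_cases h : G.Adj p.1 p.2
      · simp only [h, not_true_eq_false, false_implies, Set.setOf_true]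
        exact isClosed_univ
      · simp only [h, not_false_eq_true, true_implies]
        exact isClosed_eq (EuclideanSpace.proj p).continuous continuous_const

lemma mem_coneK {x : EuclideanSpace ℝ (V × V)} :
    x ∈ coneK G ↔ ∀ p : V × V, 0 ≤ x p ∧ (¬ G.Adj p.1 p.2 → x p = 0) :=
  Iff.rfl

/-- The row/column sum map. -/
def rowcol : EuclideanSpace ℝ (V × V) →ₗ[ℝ] EuclideanSpace ℝ (V ⊕ V) where
  toFun x := WithLp.toLp 2 (fun s => Sum.elim (fun u => ∑ v, x (u, v)) (fun v => ∑ u, x (u, v)) s)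
  map_add' x y := by
    ext s
    rcases s with u | v <;>
      simp [Finset.sum_add_distrib]
  map_smul' c x := by
    ext s
    rcases s with u | v <;>
      simp [Finset.mul_sum]

end Geom

/-- if the minimal α-ratio of `G` equals `1`, i.e. `w(Γ(S)) ≥ w(S)` for
every nonempty `S ⊆ V`, then there is a nonnegative flow `f` supported on edges of `G`
with `Σ_{v∈Γ(u)} f(u,v) = w(u)` and `Σ_{v∈Γ(u)} f(v,u) = w(u)` for every vertex `u`. -/
theorem unit_alpha_flow {V : Type*} [Fintype V] [DecidableEq V]
    (G : SimpleGraph V) [DecidableRel G.Adj] (w : V → ℝ)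
    (hw : ∀ v, 0 < w v) (hiso : ∀ v : V, ∃ u, G.Adj v u)
    (hα : ∀ S : Finset V, S.Nonempty → wsum w S ≤ wsum w (nbhd G S)) :
    ∃ f : V → V → ℝ,
      (∀ u v, 0 ≤ f u v) ∧
      (∀ u v, f u v ≠ 0 → G.Adj u v) ∧
      (∀ u : V, ∑ v ∈ G.neighborFinset u, f u v = w u) ∧
      (∀ u : V, ∑ v ∈ G.neighborFinset u, f v u = w u) := by
  classical
  set fL : EuclideanSpace ℝ (V × V) →L[ℝ] EuclideanSpace ℝ (V ⊕ V) :=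
    LinearMap.toContinuousLinearMap (rowcol (V := V)) with hfL
  set b : EuclideanSpace ℝ (V ⊕ V) := WithLp.toLp 2 (fun s => Sum.elim w w s) with hb
  -- Step 1: b is in the closed cone `coneK.map fL` via Farkas / hyperplane separation.
  have hmem : b ∈ (coneK G).map fL := by
    rw [ProperCone.relative_hyperplane_separation]
    intro y hy
    -- edge inequalities
    have hedge : ∀ u v, G.Adj u v → 0 ≤ y (Sum.inl u) + y (Sum.inr v) := by
      intro u v hadj
      set xe : EuclideanSpace ℝ (V × V) := WithLp.toLp 2 (fun p => if p = (u, v) then 1 else 0) with hxe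
      have hxeK : xe ∈ coneK G := by
        rw [mem_coneK]
        intro p
        constructor
        · show (0:ℝ) ≤ if p = (u, v) then 1 else 0
          split <;> norm_num
        · intro hnadj
          show (if p = (u, v) then (1:ℝ) else 0) = 0
          rw [if_neg]
          rintro rfl
          exact hnadj hadj
      have h0 := (ProperCone.mem_innerDual.1 hy) hxeK
      rw [ContinuousLinearMap.adjoint_inner_right] at h0
      have hfxe : ∀ s : V ⊕ V, (fL xe) s
          = Sum.elim (fun u' => if u' = u then (1:ℝ) else 0)
              (fun v' => if v' = v then (1:ℝ) else 0) s := by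
        rintro (u' | v')
        · show (∑ v', if (u', v') = (u, v) then (1:ℝ) else 0) = _
          simp [Prod.ext_iff, ite_and]
        · show (∑ u', if (u', v') = (u, v) then (1:ℝ) else 0) = _
          simp [Prod.ext_iff, ite_and]
      rw [PiLp.inner_apply] at h0
      simp only [RCLike.inner_apply, starRingEnd_apply, star_trivial] at h0
      rw [Fintype.sum_sum_type] at h0
      simp only [hfxe] at h0
      simpa [Finset.sum_ite_eq'] using h0
    -- the dual inequality
    have hcore := core_dual G w hw hα (fun u => y (Sum.inl u)) (fun v => y (Sum.inr v)) hedge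
    rw [PiLp.inner_apply]
    simp only [RCLike.inner_apply, starRingEnd_apply, star_trivial]
    rw [Fintype.sum_sum_type]
    have hbl : ∀ u, b (Sum.inl u) = w u := fun u => rfl
    have hbr : ∀ v, b (Sum.inr v) = w v := fun v => rfl
    simp only [hbl, hbr]
    calc (0:ℝ) ≤ ∑ u, w u * y (Sum.inl u) + ∑ v, w v * y (Sum.inr v) := hcore
      _ = ∑ u, y (Sum.inl u) * w u + ∑ v, y (Sum.inr v) * w v := by
          simp [mul_comm]
  -- Step 2: extract an actual preimage from the closure.
  rw [ProperCone.mem_map, PointedCone.mem_closure, PointedCone.coe_map] at hmem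
  obtain ⟨seq, hseqmem, htend⟩ := mem_closure_iff_seq_limit.1 hmem
  choose xs hxsK hxseq using hseqmem
  set W : ℝ := ∑ u, w u with hW
  have hsums : ∀ n, ∑ u, seq n (Sum.inl u) = ∑ p : V × V, xs n p := by
    intro n
    rw [← hxseq n]
    rw [Fintype.sum_prod_type]
    rfl
  have hcont : Filter.Tendsto (fun n => ∑ u, seq n (Sum.inl u)) Filter.atTop (nhds W) := by
    have : Filter.Tendsto (fun n => ∑ u, seq n (Sum.inl u)) Filter.atTop
        (nhds (∑ u, b (Sum.inl u))) := by
      refine tendsto_finset_sum _ fun u _ => ?_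
      exact ((EuclideanSpace.proj (Sum.inl u : V ⊕ V)).continuous.tendsto b).comp htend
    simpa [hb, hW] using this
  have hev : ∀ᶠ n in Filter.atTop, ∑ u, seq n (Sum.inl u) < W + 1 :=
    hcont.eventually_lt_const (by linarith)
  have hnormle : ∀ n, ‖xs n‖ ≤ ∑ p : V × V, xs n p := by
    intro n
    have hxn : ∀ p, 0 ≤ xs n p := fun p => ((hxsK n) p).1
    have hs : ∀ p, xs n p ≤ ∑ p' : V × V, xs n p' :=
      fun p => Finset.single_le_sum (fun i _ => hxn i) (Finset.mem_univ p)
    have hS0 : 0 ≤ ∑ p' : V × V, xs n p' := Finset.sum_nonneg fun p _ => hxn p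
    rw [EuclideanSpace.norm_eq]
    have : ∑ p : V × V, ‖xs n p‖ ^ 2 ≤ (∑ p' : V × V, xs n p') ^ 2 := by
      calc ∑ p : V × V, ‖xs n p‖ ^ 2 ≤ ∑ p : V × V, xs n p * (∑ p' : V × V, xs n p') := by
            refine Finset.sum_le_sum fun p _ => ?_
            rw [Real.norm_of_nonneg (hxn p), sq]
            exact mul_le_mul_of_nonneg_left (hs p) (hxn p)
        _ = (∑ p' : V × V, xs n p') ^ 2 := by rw [← Finset.sum_mul, sq]
    calc Real.sqrt (∑ p : V × V, ‖xs n p‖ ^ 2) ≤ Real.sqrt ((∑ p' : V × V, xs n p') ^ 2) :=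
          Real.sqrt_le_sqrt this
      _ = ∑ p' : V × V, xs n p' := Real.sqrt_sq hS0
  have hevmem : ∀ᶠ n in Filter.atTop,
      seq n ∈ ⇑fL '' ((coneK G : Set (EuclideanSpace ℝ (V × V)))
        ∩ Metric.closedBall 0 (W + 1)) := by
    filter_upwards [hev] with n hn
    refine ⟨xs n, ⟨hxsK n, ?_⟩, hxseq n⟩
    rw [Metric.mem_closedBall, dist_zero_right]
    calc ‖xs n‖ ≤ ∑ p : V × V, xs n p := hnormle n
      _ = ∑ u, seq n (Sum.inl u) := (hsums n).symm
      _ ≤ W + 1 := hn.le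
  have hbmem : b ∈ closure (⇑fL '' ((coneK G : Set (EuclideanSpace ℝ (V × V)))
      ∩ Metric.closedBall 0 (W + 1))) := mem_closure_of_tendsto htend hevmem
  have hcpt : IsCompact ((coneK G : Set (EuclideanSpace ℝ (V × V)))
      ∩ Metric.closedBall 0 (W + 1)) :=
    (isCompact_closedBall 0 (W + 1)).inter_left (coneK G).isClosed
  have himgcl : IsClosed (⇑fL '' ((coneK G : Set (EuclideanSpace ℝ (V × V)))
      ∩ Metric.closedBall 0 (W + 1))) := (hcpt.image fL.continuous).isClosed
  rw [himgcl.closure_eq] at hbmem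
  obtain ⟨x, ⟨hxK, -⟩, hfx⟩ := hbmem
  -- Step 3: read off the flow.
  refine ⟨fun u v => x (u, v), ?_, ?_, ?_, ?_⟩
  · exact fun u v => ((mem_coneK G).1 hxK (u, v)).1
  · intro u v hne
    by_contra hnadj
    exact hne (((mem_coneK G).1 hxK (u, v)).2 hnadj)
  · intro u
    have h1 : (fL x) (Sum.inl u) = b (Sum.inl u) := congrArg (fun z => z (Sum.inl u)) hfx
    have h2 : (∑ v, x (u, v)) = w u := h1
    rw [← h2]
    refine Finset.sum_subset (Finset.subset_univ _) fun v _ hv => ?_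
    refine ((mem_coneK G).1 hxK (u, v)).2 ?_
    rwa [SimpleGraph.mem_neighborFinset] at hv
  · intro u
    have h1 : (fL x) (Sum.inr u) = b (Sum.inr u) := congrArg (fun z => z (Sum.inr u)) hfx
    have h2 : (∑ v, x (v, u)) = w u := h1
    rw [← h2]
    refine Finset.sum_subset (Finset.subset_univ _) fun v _ hv => ?_
    refine ((mem_coneK G).1 hxK (v, u)).2 ?_
    rw [SimpleGraph.mem_neighborFinset] at hv
    exact fun h => hv (G.adj_symm h)
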